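/- Let G(α, β) = O₁ log(O₁/n₁) + O₂ log(O₂/n₂) with O₁ = 2(1+α), O₂ = 2(1−α), n₁ = (1+α) + sβ, n₂ = (1−α) − sβ, defined where n₁ > 0, n₂ > 0, and α ∈ (−1,1), s a real constant. Then ∂G/∂β = 4s²β/(n₁n₂) and ∂²G/∂β² = (4s²/(n₁n₂)²)(1 − α² + s²β²) ≥ 0. In particular, G(α,·) is convex in β, nondecreasing for β ≥ 0 and nonincreasing for β ≤ 0, and G(α,0) = 4 log 2 is constant. -/

import Mathlib

open Real Set

/-- The correction term `G` relating the population SBM log-likelihood to the DCSBM one,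
in `(α, β)` coordinates, as a function of `β` for fixed `α` and constant `s`. -/
noncomputable def Gb (α s b : ℝ) : ℝ :=
  2 * (1 + α) * Real.log (2 * (1 + α) / ((1 + α) + s * b))
    + 2 * (1 - α) * Real.log (2 * (1 - α) / ((1 - α) - s * b))

lemma aff1 (α s β : ℝ) : HasDerivAt (fun b : ℝ => (1 + α) + s * b) s β := by
  simpa using ((hasDerivAt_id β).const_mul s).const_add (1 + α)

lemma aff2 (α s β : ℝ) : HasDerivAt (fun b : ℝ => (1 - α) - s * b) (-s) β := by
  simpa using ((hasDerivAt_id β).const_mul s).const_sub (1 - α)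

lemma openD (α s : ℝ) : IsOpen {b : ℝ | 0 < (1 + α) + s * b ∧ 0 < (1 - α) - s * b} := by
  have h1 : IsOpen {b : ℝ | 0 < (1 + α) + s * b} :=
    isOpen_lt continuous_const (by continuity)
  have h2 : IsOpen {b : ℝ | 0 < (1 - α) - s * b} :=
    isOpen_lt continuous_const (by continuity)
  exact h1.inter h2

lemma convexD (α s : ℝ) :
    Convex ℝ {b : ℝ | 0 < (1 + α) + s * b ∧ 0 < (1 - α) - s * b} := by
  intro x hx y hy a b ha hb hab
  have key1 : (1 + α) + s * (a * x + b * y)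
      = a * ((1 + α) + s * x) + b * ((1 + α) + s * y) := by
    linear_combination (-(1 + α)) * hab
  have key2 : (1 - α) - s * (a * x + b * y)
      = a * ((1 - α) - s * x) + b * ((1 - α) - s * y) := by
    linear_combination (-(1 - α)) * hab
  have pos : ∀ P Q : ℝ, 0 < P → 0 < Q → 0 < a * P + b * Q := by
    intro P Q hP hQ
    rcases ha.lt_or_eq with h | h
    · exact add_pos_of_pos_of_nonneg (mul_pos h hP) (mul_nonneg hb hQ.le)
    · have hb1 : b = 1 := by linarith
      simp [← h, hb1, hQ]
  constructor
  · simpa only [smul_eq_mul, key1] using pos _ _ hx.1 hy.1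
  · simpa only [smul_eq_mul, key2] using pos _ _ hx.2 hy.2

lemma hasDerivAt_Gb (α s : ℝ) (hα1 : -1 < α) (hα2 : α < 1) {β : ℝ}
    (h1 : 0 < (1 + α) + s * β) (h2 : 0 < (1 - α) - s * β) :
    HasDerivAt (Gb α s) (4 * s ^ 2 * β / (((1 + α) + s * β) * ((1 - α) - s * β))) β := by
  have hA : (0:ℝ) < 1 + α := by linarith
  have hB : (0:ℝ) < 1 - α := by linarith
  have hD : HasDerivAt
      (fun b => 2 * (1 + α) * (Real.log (2 * (1 + α)) - Real.log ((1 + α) + s * b))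
        + 2 * (1 - α) * (Real.log (2 * (1 - α)) - Real.log ((1 - α) - s * b)))
      (2 * (1 + α) * (0 - s / ((1 + α) + s * β))
        + 2 * (1 - α) * (0 - (-s) / ((1 - α) - s * β))) β := by
    exact (((hasDerivAt_const β _).sub ((aff1 α s β).log h1.ne')).const_mul _).add
      (((hasDerivAt_const β _).sub ((aff2 α s β).log h2.ne')).const_mul _)
  have heq : Gb α s =ᶠ[nhds β]
      (fun b => 2 * (1 + α) * (Real.log (2 * (1 + α)) - Real.log ((1 + α) + s * b))
        + 2 * (1 - α) * (Real.log (2 * (1 - α)) - Real.log ((1 - α) - s * b))) := by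
    filter_upwards [(openD α s).mem_nhds ⟨h1, h2⟩] with b hb
    simp only [Gb]
    rw [Real.log_div (by positivity) hb.1.ne', Real.log_div (by positivity) hb.2.ne']
  have h := hD.congr_of_eventuallyEq heq
  convert h using 1
  · rfl
  · rfl
  field_simp
  ring

lemma hasDerivAt_G' (α s : ℝ) {β : ℝ}
    (h1 : 0 < (1 + α) + s * β) (h2 : 0 < (1 - α) - s * β) :
    HasDerivAt (fun b => 4 * s ^ 2 * b / (((1 + α) + s * b) * ((1 - α) - s * b)))
      ((4 * s ^ 2 / (((1 + α) + s * β) * ((1 - α) - s * β)) ^ 2)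
        * (1 - α ^ 2 + s ^ 2 * β ^ 2)) β := by
  have hden : ((1 + α) + s * β) * ((1 - α) - s * β) ≠ 0 := by positivity
  have hnum : HasDerivAt (fun b : ℝ => 4 * s ^ 2 * b) (4 * s ^ 2) β := by
    simpa using (hasDerivAt_id β).const_mul (4 * s ^ 2)
  have hd : HasDerivAt (fun b => ((1 + α) + s * b) * ((1 - α) - s * b))
      (s * ((1 - α) - s * β) + ((1 + α) + s * β) * (-s)) β :=
    (aff1 α s β).mul (aff2 α s β)
  have h := hnum.div hd hden
  convert h using 1
  · rfl
  · rfl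
  · rfl
  field_simp
  ring

theorem stmt11 (α s : ℝ) (hα : α ∈ Set.Ioo (-1 : ℝ) 1) :
    (∀ β : ℝ, 0 < (1 + α) + s * β → 0 < (1 - α) - s * β →
      HasDerivAt (Gb α s) (4 * s ^ 2 * β / (((1 + α) + s * β) * ((1 - α) - s * β))) β ∧
      HasDerivAt (fun b => 4 * s ^ 2 * b / (((1 + α) + s * b) * ((1 - α) - s * b)))
        ((4 * s ^ 2 / (((1 + α) + s * β) * ((1 - α) - s * β)) ^ 2)
          * (1 - α ^ 2 + s ^ 2 * β ^ 2)) β ∧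
      0 ≤ (4 * s ^ 2 / (((1 + α) + s * β) * ((1 - α) - s * β)) ^ 2)
          * (1 - α ^ 2 + s ^ 2 * β ^ 2)) ∧
    ConvexOn ℝ {b : ℝ | 0 < (1 + α) + s * b ∧ 0 < (1 - α) - s * b} (Gb α s) ∧
    (∀ β₁ β₂ : ℝ, 0 ≤ β₁ → β₁ ≤ β₂ →
      0 < (1 + α) + s * β₁ → 0 < (1 - α) - s * β₁ →
      0 < (1 + α) + s * β₂ → 0 < (1 - α) - s * β₂ → Gb α s β₁ ≤ Gb α s β₂) ∧
    (∀ β₁ β₂ : ℝ, β₁ ≤ β₂ → β₂ ≤ 0 →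
      0 < (1 + α) + s * β₁ → 0 < (1 - α) - s * β₁ →
      0 < (1 + α) + s * β₂ → 0 < (1 - α) - s * β₂ → Gb α s β₂ ≤ Gb α s β₁) ∧
    Gb α s 0 = 4 * Real.log 2 := by
  obtain ⟨hα1, hα2⟩ := hα
  have hA : (0:ℝ) < 1 + α := by linarith
  have hB : (0:ℝ) < 1 - α := by linarith
  set D := {b : ℝ | 0 < (1 + α) + s * b ∧ 0 < (1 - α) - s * b} with hDdef
  have hnn : ∀ β : ℝ, 0 < (1 + α) + s * β → 0 < (1 - α) - s * β →
      0 ≤ (4 * s ^ 2 / (((1 + α) + s * β) * ((1 - α) - s * β)) ^ 2)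
          * (1 - α ^ 2 + s ^ 2 * β ^ 2) := by
    intro β h1 h2
    have : 0 ≤ 1 - α ^ 2 := by nlinarith
    positivity
  -- deriv identities on D
  have hderivG : ∀ x ∈ D, deriv (Gb α s) x
      = 4 * s ^ 2 * x / (((1 + α) + s * x) * ((1 - α) - s * x)) := fun x hx =>
    (hasDerivAt_Gb α s hα1 hα2 hx.1 hx.2).deriv
  have hderiv2 : ∀ x ∈ D, deriv^[2] (Gb α s) x
      = (4 * s ^ 2 / (((1 + α) + s * x) * ((1 - α) - s * x)) ^ 2)
          * (1 - α ^ 2 + s ^ 2 * x ^ 2) := by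
    intro x hx
    have hev : deriv (Gb α s) =ᶠ[nhds x]
        (fun b => 4 * s ^ 2 * b / (((1 + α) + s * b) * ((1 - α) - s * b))) := by
      filter_upwards [(openD α s).mem_nhds hx] with b hb
      exact hderivG b hb
    have : deriv (deriv (Gb α s)) x
        = deriv (fun b => 4 * s ^ 2 * b / (((1 + α) + s * b) * ((1 - α) - s * b))) x :=
      hev.deriv_eq
    simp only [Function.iterate_succ, Function.iterate_zero, Function.comp_apply, id_eq]
    rw [this, (hasDerivAt_G' α s hx.1 hx.2).deriv]
  have hintD : interior D = D := (openD α s).interior_eq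
  have hconv : ConvexOn ℝ D (Gb α s) := by
    apply convexOn_of_deriv2_nonneg (convexD α s)
    · intro x hx
      exact (hasDerivAt_Gb α s hα1 hα2 hx.1 hx.2).continuousAt.continuousWithinAt
    · rw [hintD]
      intro x hx
      exact (hasDerivAt_Gb α s hα1 hα2 hx.1 hx.2).differentiableAt.differentiableWithinAt
    · rw [hintD]
      intro x hx
      refine DifferentiableAt.differentiableWithinAt ?_
      have hev : deriv (Gb α s) =ᶠ[nhds x]
          (fun b => 4 * s ^ 2 * b / (((1 + α) + s * b) * ((1 - α) - s * b))) := by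
        filter_upwards [(openD α s).mem_nhds hx] with b hb
        exact hderivG b hb
      exact (hasDerivAt_G' α s hx.1 hx.2).differentiableAt.congr_of_eventuallyEq hev
    · rw [hintD]
      intro x hx
      rw [hderiv2 x hx]
      exact hnn x hx.1 hx.2
  refine ⟨fun β h1 h2 => ⟨hasDerivAt_Gb α s hα1 hα2 h1 h2, hasDerivAt_G' α s h1 h2,
    hnn β h1 h2⟩, hconv, ?_, ?_, ?_⟩
  · -- monotone on β ≥ 0
    intro β₁ β₂ hβ₁ h12 ha1 ha2 hb1 hb2
    have hsub : Icc β₁ β₂ ⊆ D := by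
      rw [← segment_eq_Icc h12]
      exact (convexD α s).segment_subset ⟨ha1, ha2⟩ ⟨hb1, hb2⟩
    have hmono : MonotoneOn (Gb α s) (Icc β₁ β₂) := by
      apply monotoneOn_of_deriv_nonneg (convex_Icc _ _)
      · intro x hx
        exact (hasDerivAt_Gb α s hα1 hα2 (hsub hx).1 (hsub hx).2).continuousAt.continuousWithinAt
      · intro x hx
        have hx' : x ∈ Icc β₁ β₂ := interior_subset hx
        exact (hasDerivAt_Gb α s hα1 hα2 (hsub hx').1 (hsub hx').2).differentiableAt.differentiableWithinAt
      · intro x hx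
        rw [interior_Icc] at hx
        have hx' : x ∈ Icc β₁ β₂ := Ioo_subset_Icc_self hx
        rw [hderivG x (hsub hx')]
        have hx0 : 0 ≤ x := le_trans hβ₁ hx.1.le
        have := (hsub hx').1
        have := (hsub hx').2
        positivity
    exact hmono (left_mem_Icc.mpr h12) (right_mem_Icc.mpr h12) h12
  · -- antitone on β ≤ 0
    intro β₁ β₂ h12 hβ₂ ha1 ha2 hb1 hb2
    have hsub : Icc β₁ β₂ ⊆ D := by
      rw [← segment_eq_Icc h12]
      exact (convexD α s).segment_subset ⟨ha1, ha2⟩ ⟨hb1, hb2⟩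
    have hanti : AntitoneOn (Gb α s) (Icc β₁ β₂) := by
      apply antitoneOn_of_deriv_nonpos (convex_Icc _ _)
      · intro x hx
        exact (hasDerivAt_Gb α s hα1 hα2 (hsub hx).1 (hsub hx).2).continuousAt.continuousWithinAt
      · intro x hx
        have hx' : x ∈ Icc β₁ β₂ := interior_subset hx
        exact (hasDerivAt_Gb α s hα1 hα2 (hsub hx').1 (hsub hx').2).differentiableAt.differentiableWithinAt
      · intro x hx
        rw [interior_Icc] at hx
        have hx' : x ∈ Icc β₁ β₂ := Ioo_subset_Icc_self hx
        rw [hderivG x (hsub hx')]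
        have hx0 : x ≤ 0 := le_trans hx.2.le hβ₂
        have hp1 := (hsub hx').1
        have hp2 := (hsub hx').2
        apply div_nonpos_of_nonpos_of_nonneg
        · nlinarith [sq_nonneg s]
        · positivity
    exact hanti (left_mem_Icc.mpr h12) (right_mem_Icc.mpr h12) h12
  · -- value at 0
    simp only [Gb, mul_zero, add_zero, sub_zero]
    rw [mul_div_assoc, div_self hA.ne', mul_div_assoc, div_self hB.ne']
    ring
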